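/- Suppose c₀, …, c_{g−1} ∈ k satisfy the polynomial identity φ_g(X + a)·X^{g+1} = φ_g(X)·(X + a)^{g+1} − 2·(X + a)^{g+1}·X^{g+1}·(Σ_{i=0}^{g−1} cᵢ·Xⁱ) in k[X]. Then c_{g−1} = −(g·a)/2, which (since p divides 2g+1) equals a/4; in particular c_{g−1} ≠ 0. (This is the coefficient comparison showing that no k[G]-linear splitting of the Hodge–de Rham sequence can exist.) -/

import Mathlib

open Polynomial

/-- The truncation of a polynomial in degrees `≤ m`. -/
noncomputable def truncLE {k : Type} [Field k] (m : ℕ) (u : k[X]) : k[X] :=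
  ∑ j ∈ Finset.range (m + 1), C (u.coeff j) * X ^ j

/-- `s_g(X) := X·f′(X) − 2g·f(X)`. -/
noncomputable def sPoly {k : Type} [Field k] (f : k[X]) (g : ℕ) : k[X] :=
  X * derivative f - C ((2 * g : ℕ) : k) * f

/-- `φ_g(X)`, the sum of the terms of `s_g` of degree `> g`. -/
noncomputable def phiPoly {k : Type} [Field k] (f : k[X]) (g : ℕ) : k[X] :=
  sPoly f g - truncLE g (sPoly f g)

lemma coeff_sum_CX {k : Type} [Field k] (m : ℕ) (c : ℕ → k) (j : ℕ) :
    (∑ i ∈ Finset.range m, C (c i) * X ^ i).coeff j = if j < m then c j else 0 := by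
  rw [finset_sum_coeff]
  simp only [coeff_C_mul, coeff_X_pow, mul_ite, mul_one, mul_zero]
  rw [Finset.sum_ite_eq (Finset.range m) j c]
  simp [Finset.mem_range]

lemma truncLE_coeff {k : Type} [Field k] (m : ℕ) (u : k[X]) (j : ℕ) :
    (truncLE m u).coeff j = if j < m + 1 then u.coeff j else 0 := by
  unfold truncLE
  exact coeff_sum_CX (m + 1) u.coeff j

/-- Let `k` be algebraically closed of characteristic `p ≥ 3`, `g ≥ 2` with
`p ∣ 2g+1`, `a ≠ 0`, and `f` monic of degree `2g+1`.  If `c₀, …, c_{g−1} ∈ k` satisfy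
`φ_g(X + a)·X^{g+1} = φ_g(X)·(X + a)^{g+1} − 2·(X + a)^{g+1}·X^{g+1}·(Σ_{i<g} cᵢXⁱ)` in `k[X]`,
then `c_{g−1} = −(g·a)/2 = a/4 ≠ 0`. -/
theorem statement10 {k : Type} [Field k] [IsAlgClosed k] (p : ℕ) [CharP k p] (hp : 3 ≤ p)
    (g : ℕ) (hg : 2 ≤ g) (hpg : p ∣ 2 * g + 1) (a : k) (ha : a ≠ 0)
    (f : k[X]) (hmonic : f.Monic) (hdeg : f.natDegree = 2 * g + 1)
    (c : ℕ → k)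
    (hc : (phiPoly f g).comp (X + C a) * X ^ (g + 1) =
        phiPoly f g * (X + C a) ^ (g + 1) -
          2 * (X + C a) ^ (g + 1) * X ^ (g + 1) *
            (∑ i ∈ Finset.range g, C (c i) * X ^ i)) :
    c (g - 1) = -((g : k) * a) / 2 ∧ c (g - 1) = a / 4 ∧ c (g - 1) ≠ 0 := by
  have hfc : f.coeff (2 * g + 1) = 1 := by
    have := hmonic.coeff_natDegree
    rwa [hdeg] at this
  -- coefficients of sPoly
  have hs_top : (sPoly f g).coeff (2 * g + 1) = 1 := by
    unfold sPoly
    rw [coeff_sub, coeff_C_mul, show 2 * g + 1 = (2 * g) + 1 from rfl, coeff_X_mul,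
      coeff_derivative, hfc]
    push_cast
    ring
  have hs_high : ∀ i, 2 * g + 1 < i → (sPoly f g).coeff i = 0 := by
    intro i hi
    obtain ⟨n, rfl⟩ : ∃ n, i = n + 1 := ⟨i - 1, by omega⟩
    unfold sPoly
    rw [coeff_sub, coeff_X_mul, coeff_derivative, coeff_C_mul]
    have h1 : f.coeff (n + 1) = 0 := coeff_eq_zero_of_natDegree_lt (by omega)
    rw [h1]; ring
  have hφ_eq : ∀ j, g < j → (phiPoly f g).coeff j = (sPoly f g).coeff j := by
    intro j hj
    unfold phiPoly
    rw [coeff_sub, truncLE_coeff, if_neg (by omega), sub_zero]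
  have hφtop : (phiPoly f g).coeff (2 * g + 1) = 1 := by
    rw [hφ_eq _ (by omega), hs_top]
  have hφhigh : ∀ i, 2 * g + 1 < i → (phiPoly f g).coeff i = 0 := by
    intro i hi
    rw [hφ_eq _ (by omega), hs_high _ hi]
  set φ := phiPoly f g with hφdef
  set b := φ.coeff (2 * g) with hbdef
  -- LHS coefficient at 3g+1
  have hL : (φ.comp (X + C a) * X ^ (g + 1)).coeff (3 * g + 1)
      = b + (2 * (g : k) + 1) * a := by
    rw [show 3 * g + 1 = 2 * g + (g + 1) from by ring, coeff_mul_X_pow, ← taylor_apply,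
      taylor_coeff]
    have hφnd : φ.natDegree ≤ 2 * g + 1 := natDegree_le_iff_coeff_eq_zero.mpr hφhigh
    have hnd : ((hasseDeriv (2 * g)) φ).natDegree < 2 := by
      have := natDegree_hasseDeriv_le φ (2 * g)
      omega
    rw [eval_eq_sum_range' hnd a]
    rw [Finset.sum_range_succ, Finset.sum_range_succ, Finset.sum_range_zero]
    rw [hasseDeriv_coeff, hasseDeriv_coeff]
    simp only [Nat.zero_add, Nat.choose_self]
    rw [show 1 + 2 * g = 2 * g + 1 from by ring, Nat.choose_succ_self_right, hφtop]
    push_cast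
    ring
  -- first RHS coefficient
  have hR1 : (φ * (X + C a) ^ (g + 1)).coeff (3 * g + 1) = a * ((g : k) + 1) + b := by
    rw [coeff_mul]
    have hsub : ({(2 * g, g + 1), (2 * g + 1, g)} : Finset (ℕ × ℕ))
        ⊆ Finset.HasAntidiagonal.antidiagonal (3 * g + 1) := by
      intro x hx
      simp only [Finset.mem_insert, Finset.mem_singleton] at hx
      rcases hx with h | h <;> subst h <;> simp [Finset.HasAntidiagonal.mem_antidiagonal] <;> omega
    have hz : ∀ x ∈ Finset.HasAntidiagonal.antidiagonal (3 * g + 1),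
        x ∉ ({(2 * g, g + 1), (2 * g + 1, g)} : Finset (ℕ × ℕ)) →
        φ.coeff x.1 * ((X + C a) ^ (g + 1)).coeff x.2 = 0 := by
      rintro ⟨i, j⟩ hmem hns
      rw [Finset.HasAntidiagonal.mem_antidiagonal] at hmem
      simp only [Finset.mem_insert, Finset.mem_singleton, Prod.mk.injEq, not_or, not_and] at hns
      by_cases hi : 2 * g + 1 < i
      · rw [hφhigh i hi, zero_mul]
      · have hj : g + 1 < j := by
          rcases hns with ⟨h1, h2⟩
          omega
        rw [coeff_X_add_C_pow, Nat.choose_eq_zero_of_lt (by omega)]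
        simp
    rw [← Finset.sum_subset hsub hz]
    rw [Finset.sum_pair (by intro h; rw [Prod.mk.injEq] at h; omega)]
    simp only [coeff_X_add_C_pow]
    rw [hφtop, show g + 1 - (g + 1) = 0 from by omega, show g + 1 - g = 1 from by omega,
      Nat.choose_self, Nat.choose_succ_self_right]
    push_cast
    ring
  -- second RHS coefficient
  have hR2 : (2 * (X + C a) ^ (g + 1) * X ^ (g + 1) *
      (∑ i ∈ Finset.range g, C (c i) * X ^ i)).coeff (3 * g + 1) = 2 * c (g - 1) := by
    rw [show 2 * (X + C a) ^ (g + 1) * X ^ (g + 1) * (∑ i ∈ Finset.range g, C (c i) * X ^ i)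
        = (2 * ((X + C a) ^ (g + 1) * (∑ i ∈ Finset.range g, C (c i) * X ^ i))) * X ^ (g + 1)
        from by ring]
    rw [show 3 * g + 1 = 2 * g + (g + 1) from by ring, coeff_mul_X_pow]
    have h2 : ∀ P : k[X], ((2 : k[X]) * P).coeff (2 * g) = 2 * P.coeff (2 * g) := by
      intro P; simp
    rw [h2, coeff_mul]
    rw [Finset.sum_eq_single_of_mem (g + 1, g - 1)
      (by rw [Finset.HasAntidiagonal.mem_antidiagonal]; omega)]
    · rw [coeff_X_add_C_pow, show g + 1 - (g + 1) = 0 from by omega, Nat.choose_self,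
        coeff_sum_CX, if_pos (by omega)]
      ring
    · rintro ⟨i, j⟩ hmem hne
      rw [Finset.HasAntidiagonal.mem_antidiagonal] at hmem
      simp only [ne_eq, Prod.mk.injEq, not_and] at hne
      by_cases hi : g + 1 < i
      · rw [coeff_X_add_C_pow, Nat.choose_eq_zero_of_lt (by omega)]
        simp
      · have hj : g ≤ j := by
          by_contra hjlt
          push_neg at hjlt
          have : j = g - 1 := by omega
          omega
        rw [coeff_sum_CX, if_neg (by omega), mul_zero]
  -- combine
  have heq := congrArg (fun P : k[X] => P.coeff (3 * g + 1)) hc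
  simp only [coeff_sub] at heq
  rw [hL, hR1, hR2] at heq
  -- characteristic facts
  have h2g1 : 2 * (g : k) + 1 = 0 := by
    have : ((2 * g + 1 : ℕ) : k) = 0 := (CharP.cast_eq_zero_iff k p _).mpr hpg
    push_cast at this
    linear_combination this
  have h2 : (2 : k) ≠ 0 := by
    intro h
    have : ((2 : ℕ) : k) = 0 := by push_cast; exact h
    have := (CharP.cast_eq_zero_iff k p 2).mp this
    have := Nat.le_of_dvd (by norm_num) this
    omega
  have h4 : (4 : k) ≠ 0 := by
    have : (4 : k) = 2 * 2 := by norm_num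
    rw [this]
    exact mul_ne_zero h2 h2
  have key : c (g - 1) = -((g : k) * a) / 2 := by
    rw [eq_div_iff h2]
    linear_combination heq
  have key2 : c (g - 1) = a / 4 := by
    rw [eq_div_iff h4]
    linear_combination 2 * heq - a * h2g1
  refine ⟨key, key2, ?_⟩
  rw [key2]
  exact div_ne_zero ha h4
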